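/- arXiv:1609.09121 — 5 statements merged into one kernel-verified Lean document; each statement's English description precedes it below -/
import Mathlib

section
/- Let Ψ be a compact subset of the annulus A = [0,1] × ℝ/ℤ and H : Ψ → Ψ a uniformly rigid homeomorphism (i.e., some subsequence of iterates H^{n_i} converges uniformly to the identity). Suppose the preimage Ψ̃ = q⁻¹(Ψ) of Ψ under the universal covering map q : [0,1] × ℝ → A is connected, and let H̃ be a lift of H to Ψ̃. Then for every ε > 0 there exist an integer k > 0 and an integer j ∈ ℤ such that for every y ∈ Ψ̃ one has |π̃₁(H̃^k(y)) − π̃₁(y) − j| < ε, where π̃₁ denotes projection onto the ℝ-coordinate. -/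
/-- For a uniformly rigid homeomorphism of a compact subset of the annulus
whose lift to the universal cover `[0,1] × ℝ` is connected, for every `ε > 0` there are
`k > 0` and `j ∈ ℤ` with `|π̃₁(H̃^k y) − π̃₁ y − j| < ε` for all `y` in the lift.
Here the annulus picture is modelled in the cover: `Ψt = q⁻¹(Ψ)` is a closed, connected,
deck-invariant subset of the strip, `Ht` is a lift of `H` (deck-equivariant), and uniform
rigidity of `H` is expressed through the covering (a local isometry): some subsequence of
iterates is, up to a deck translation at each point, uniformly close to the identity. -/
theorem pseudo_suspension_stmt0
    (Ψt : Set (ℝ × ℝ))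
    (hsub : Ψt ⊆ Set.Icc (0:ℝ) 1 ×ˢ (Set.univ : Set ℝ))
    (hclosed : IsClosed Ψt)
    (hne : Ψt.Nonempty)
    (hconn : IsConnected Ψt)
    (hdeck : ∀ y : ℝ × ℝ, y ∈ Ψt ↔ (y.1, y.2 + 1) ∈ Ψt)
    (Ht : ℝ × ℝ → ℝ × ℝ)
    (hcont : ContinuousOn Ht Ψt)
    (hmaps : Set.MapsTo Ht Ψt Ψt)
    (hbij : Set.BijOn Ht Ψt Ψt)
    (hequiv : ∀ y ∈ Ψt, Ht (y.1, y.2 + 1) = ((Ht y).1, (Ht y).2 + 1))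
    (n : ℕ → ℕ) (hmono : StrictMono n) (hpos : ∀ i, 0 < n i)
    (hrigid : ∀ ε > (0:ℝ), ∃ I : ℕ, ∀ i ≥ I, ∀ y ∈ Ψt,
      ∃ j : ℤ, dist (Ht^[n i] y) (y.1, y.2 + (j : ℝ)) < ε) :
    ∀ ε > (0:ℝ), ∃ k : ℕ, 0 < k ∧ ∃ j : ℤ, ∀ y ∈ Ψt,
      |(Ht^[k] y).2 - y.2 - (j : ℝ)| < ε := by
  intro ε hε
  set δ : ℝ := min ε (1/4) with hδdef
  have hδpos : 0 < δ := lt_min hε (by norm_num)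
  have hδ4 : δ ≤ 1/4 := min_le_right _ _
  have hδε : δ ≤ ε := min_le_left _ _
  obtain ⟨I, hI⟩ := hrigid δ hδpos
  refine ⟨n I, hpos I, ?_⟩
  set k := n I with hk
  -- iterate is continuous on Ψt and maps Ψt to itself
  have hmapsk : ∀ m : ℕ, Set.MapsTo (Ht^[m]) Ψt Ψt := fun m => hmaps.iterate m
  have hcontk : ∀ m : ℕ, ContinuousOn (Ht^[m]) Ψt := by
    intro m
    induction m with
    | zero => simpa using continuousOn_id
    | succ m ih =>
        rw [Function.iterate_succ]
        exact ih.comp hcont hmaps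
  -- pointwise: second coordinate displacement is δ-close to an integer
  have key : ∀ y ∈ Ψt, ∃ j : ℤ, |(Ht^[k] y).2 - y.2 - (j : ℝ)| < δ := by
    intro y hy
    obtain ⟨j, hj⟩ := hI I le_rfl y hy
    refine ⟨j, ?_⟩
    have h2 : dist (Ht^[k] y).2 (y.2 + (j : ℝ)) ≤ dist (Ht^[k] y) (y.1, y.2 + (j : ℝ)) := by
      rw [Prod.dist_eq]; exact le_max_right _ _
    have := lt_of_le_of_lt h2 hj
    rw [Real.dist_eq] at this
    have heq : (Ht^[k] y).2 - y.2 - (j : ℝ) = (Ht^[k] y).2 - (y.2 + (j : ℝ)) := by ring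
    rwa [heq]
  -- work in the subtype
  haveI : ConnectedSpace Ψt := Subtype.connectedSpace hconn
  set F : Ψt → ℝ := fun y => (Ht^[k] (y : ℝ × ℝ)).2 - (y : ℝ × ℝ).2 with hF
  have hFcont : Continuous F := by
    have h1 : Continuous (fun y : Ψt => Ht^[k] (y : ℝ × ℝ)) := (hcontk k).restrict
    exact (continuous_snd.comp h1).sub (continuous_snd.comp continuous_subtype_val)
  obtain ⟨y₀, hy₀⟩ := hne
  obtain ⟨j₀, hj₀⟩ := key y₀ hy₀
  refine ⟨j₀, ?_⟩
  -- the set where displacement is close to j₀ is clopen, hence everything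
  set T : Set Ψt := {y | |F y - (j₀ : ℝ)| < 1/2} with hT
  have hTdescr : ∀ y : Ψt, y ∈ T → |F y - (j₀ : ℝ)| < δ := by
    intro y hyT
    obtain ⟨j, hj⟩ := key y y.2
    have hjj : j = j₀ := by
      have habs : |(j : ℝ) - (j₀ : ℝ)| < 1 := by
        have : |(j : ℝ) - (j₀ : ℝ)| ≤ |F y - (j : ℝ)| + |F y - (j₀ : ℝ)| := by
          have := abs_sub_abs_le_abs_sub (F y - (j₀:ℝ)) (F y - (j:ℝ))
          calc |(j : ℝ) - (j₀ : ℝ)| = |(F y - (j₀:ℝ)) - (F y - (j:ℝ))| := by ring_nf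
            _ ≤ |F y - (j₀:ℝ)| + |F y - (j:ℝ)| := abs_sub _ _
            _ = |F y - (j : ℝ)| + |F y - (j₀ : ℝ)| := by ring
        have hyT' : |F y - (j₀ : ℝ)| < 1/2 := hyT
        have : |(j : ℝ) - (j₀ : ℝ)| < δ + 1/2 := lt_of_le_of_lt this (by
          exact add_lt_add hj hyT')
        linarith
      have : |((j - j₀ : ℤ) : ℝ)| < 1 := by push_cast; exact habs
      have h2 : |j - j₀| < 1 := by exact_mod_cast this
      rw [abs_lt] at h2
      omega
    rw [← hjj]; exact hj
  have hTopen : IsOpen T := by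
    have : T = F ⁻¹' {x | |x - (j₀ : ℝ)| < 1/2} := rfl
    rw [this]
    exact (isOpen_lt ((continuous_id.sub continuous_const).abs) continuous_const).preimage hFcont
  have hTclosed : IsClosed T := by
    have hTeq : T = F ⁻¹' {x | |x - (j₀ : ℝ)| ≤ 1/4} := by
      ext y
      constructor
      · intro hyT
        have := hTdescr y hyT
        exact le_of_lt (lt_of_lt_of_le this hδ4)
      · intro hy
        have : |F y - (j₀ : ℝ)| ≤ 1/4 := hy
        exact lt_of_le_of_lt this (by norm_num)
    rw [hTeq]
    exact (isClosed_le ((continuous_id.sub continuous_const).abs) continuous_const).preimage hFcont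
  have hTne : T.Nonempty := ⟨⟨y₀, hy₀⟩, lt_of_lt_of_le hj₀ (le_trans hδ4 (by norm_num))⟩
  have hTuniv : T = Set.univ := IsClopen.eq_univ ⟨hTclosed, hTopen⟩ hTne
  intro y hy
  have : (⟨y, hy⟩ : Ψt) ∈ T := hTuniv ▸ Set.mem_univ _
  exact lt_of_lt_of_le (hTdescr _ this) hδε
end

section
/- Let Ψ ⊂ A be a compact set invariant under a homeomorphism H : Ψ → Ψ that is uniformly rigid, and suppose the lift Ψ̃ = q⁻¹(Ψ) is connected. Then for every ε > 0 there exist N > 0 and a real number α_ε such that for every n ≥ N and every y ∈ Ψ̃, |(π̃₁(H̃^n(y)) − π̃₁(y))/n − α_ε| < ε. Consequently, the rotation number α = lim_{n→∞}(π̃₁(H̃^n(y)) − π̃₁(y))/n exists, is the same for all y ∈ Ψ̃, and the convergence is uniform. -/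
/-- Theorem 2.4: If `(Ψ, H)` is uniformly rigid and the lift `Ψ̃` is connected,
then for every `ε > 0` there are `N > 0` and `α_ε ∈ ℝ` such that for every `n ≥ N` and every
`y ∈ Ψ̃`, `|(π̃₁(H̃^n y) − π̃₁ y)/n − α_ε| < ε`.  Consequently the rotation number
`α = lim (π̃₁(H̃^n y) − π̃₁ y)/n` exists, is the same for all `y ∈ Ψ̃`, and the convergence is
uniform.  Setting as in Statement 0: everything is modelled in the universal cover. -/
theorem pseudo_suspension_stmt1
    (Ψt : Set (ℝ × ℝ))
    (hsub : Ψt ⊆ Set.Icc (0:ℝ) 1 ×ˢ (Set.univ : Set ℝ))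
    (hclosed : IsClosed Ψt)
    (hne : Ψt.Nonempty)
    (hconn : IsConnected Ψt)
    (hdeck : ∀ y : ℝ × ℝ, y ∈ Ψt ↔ (y.1, y.2 + 1) ∈ Ψt)
    (Ht : ℝ × ℝ → ℝ × ℝ)
    (hcont : ContinuousOn Ht Ψt)
    (hmaps : Set.MapsTo Ht Ψt Ψt)
    (hbij : Set.BijOn Ht Ψt Ψt)
    (hequiv : ∀ y ∈ Ψt, Ht (y.1, y.2 + 1) = ((Ht y).1, (Ht y).2 + 1))
    (n : ℕ → ℕ) (hmono : StrictMono n) (hpos : ∀ i, 0 < n i)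
    (hrigid : ∀ ε > (0:ℝ), ∃ I : ℕ, ∀ i ≥ I, ∀ y ∈ Ψt,
      ∃ j : ℤ, dist (Ht^[n i] y) (y.1, y.2 + (j : ℝ)) < ε) :
    (∀ ε > (0:ℝ), ∃ N : ℕ, 0 < N ∧ ∃ αε : ℝ, ∀ m ≥ N, ∀ y ∈ Ψt,
        |((Ht^[m] y).2 - y.2) / (m : ℝ) - αε| < ε) ∧
    ∃ α : ℝ, ∀ y ∈ Ψt,
      Filter.Tendsto (fun m : ℕ => ((Ht^[m] y).2 - y.2) / (m : ℝ))
        Filter.atTop (nhds α) := by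
  classical
  -- helper for rewriting second coordinates
  have hrw : ∀ (x1 a b : ℝ), a = b → (x1, a) ∈ Ψt → (x1, b) ∈ Ψt := by
    rintro x1 a b rfl h; exact h
  -- deck invariance for all integers
  have hmemZ : ∀ (t : ℤ) (y : ℝ × ℝ), y ∈ Ψt → (y.1, y.2 + (t : ℝ)) ∈ Ψt := by
    intro t
    induction t using Int.induction_on with
    | zero => intro y hy; simpa using hy
    | succ i ih =>
        intro y hy
        have h2 := (hdeck (y.1, y.2 + (i : ℝ))).mp (ih y hy)
        refine hrw _ _ _ ?_ h2
        push_cast; ring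
    | pred i ih =>
        intro y hy
        have h2 : ((y.1, y.2 + ((-(i:ℤ) - 1 : ℤ) : ℝ)) : ℝ × ℝ) ∈ Ψt := by
          refine (hdeck _).mpr ?_
          refine hrw _ _ _ ?_ (ih y hy)
          push_cast; ring
        refine hrw _ _ _ ?_ h2
        push_cast; ring
  -- equivariance for all integers
  have hequivZ : ∀ (t : ℤ) (y : ℝ × ℝ), y ∈ Ψt →
      Ht (y.1, y.2 + (t : ℝ)) = ((Ht y).1, (Ht y).2 + (t : ℝ)) := by
    intro t
    induction t using Int.induction_on with
    | zero => intro y hy; simp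
    | succ i ih =>
        intro y hy
        have hmem : ((y.1, y.2 + (i : ℝ)) : ℝ × ℝ) ∈ Ψt := hmemZ i y hy
        have h1 := hequiv _ hmem
        have h2 : Ht (y.1, y.2 + ((i : ℝ) + 1)) = Ht ((y.1, y.2 + (i:ℝ)).1, (y.1, y.2 + (i:ℝ)).2 + 1) := by
          norm_num [add_assoc]
        have ih' := ih y hy
        push_cast at ih' ⊢
        rw [h2, h1, ih']
        simp [add_assoc]
    | pred i ih =>
        intro y hy
        set z : ℝ × ℝ := (y.1, y.2 + ((-(i:ℤ) - 1 : ℤ) : ℝ)) with hz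
        have hzmem : z ∈ Ψt := hmemZ _ y hy
        have h1 := hequiv z hzmem
        have h2 : (z.1, z.2 + 1) = (y.1, y.2 + ((-(i:ℤ) : ℤ) : ℝ)) := by
          simp only [hz]; push_cast; norm_num; ring
        rw [h2, ih y hy] at h1
        -- h1 : ((Ht y).1, (Ht y).2 + (-i)) = ((Ht z).1, (Ht z).2 + 1)
        have hfst : (Ht z).1 = (Ht y).1 := by
          have := congrArg Prod.fst h1; simpa using this.symm
        have hsnd : (Ht z).2 = (Ht y).2 + ((-(i:ℤ) - 1 : ℤ) : ℝ) := by
          have := congrArg Prod.snd h1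
          push_cast at this ⊢
          linarith [this]
        rw [show Ht (y.1, y.2 + ((-(i:ℤ) - 1 : ℤ) : ℝ)) = Ht z from rfl]
        exact Prod.ext hfst hsnd
  -- iterates map Ψt to itself, are continuous, and are equivariant
  have hiterMaps : ∀ r : ℕ, Set.MapsTo (Ht^[r]) Ψt Ψt := fun r => hmaps.iterate r
  have hiterCont : ∀ r : ℕ, ContinuousOn (Ht^[r]) Ψt := by
    intro r
    induction r with
    | zero => simpa using continuousOn_id
    | succ r ih =>
        rw [Function.iterate_succ']
        exact hcont.comp ih (hiterMaps r)
  have hiterEquivZ : ∀ (r : ℕ) (t : ℤ) (y : ℝ × ℝ), y ∈ Ψt →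
      Ht^[r] (y.1, y.2 + (t : ℝ)) = ((Ht^[r] y).1, (Ht^[r] y).2 + (t : ℝ)) := by
    intro r
    induction r with
    | zero => intro t y hy; simp
    | succ r ih =>
        intro t y hy
        rw [Function.iterate_succ_apply', Function.iterate_succ_apply', ih t y hy,
          hequivZ t _ (hiterMaps r hy)]
  -- cocycle property of the displacement
  have hφadd : ∀ (a b : ℕ) (y : ℝ × ℝ),
      (Ht^[a + b] y).2 - y.2
        = ((Ht^[a] (Ht^[b] y)).2 - (Ht^[b] y).2) + ((Ht^[b] y).2 - y.2) := by
    intro a b y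
    rw [Function.iterate_add_apply]
    ring
  -- displacement is bounded (uniformly on Ψt), for each fixed iterate
  have hbdd : ∀ r : ℕ, ∃ C : ℝ, 0 ≤ C ∧ ∀ y ∈ Ψt, |(Ht^[r] y).2 - y.2| ≤ C := by
    intro r
    set K : Set (ℝ × ℝ) := Ψt ∩ (Set.Icc (0:ℝ) 1 ×ˢ Set.Icc (0:ℝ) 1) with hK
    have hKcomp : IsCompact K :=
      ((isCompact_Icc.prod isCompact_Icc).inter_left hclosed)
    have hfc : ContinuousOn (fun y : ℝ × ℝ => (Ht^[r] y).2 - y.2) K :=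
      ((continuous_snd.comp_continuousOn (hiterCont r)).sub
        continuous_snd.continuousOn).mono Set.inter_subset_left
    obtain ⟨C, hC⟩ := hKcomp.exists_bound_of_continuousOn hfc
    refine ⟨max C 0, le_max_right _ _, ?_⟩
    intro y hy
    set t : ℤ := -⌊y.2⌋ with ht
    have hy' : ((y.1, y.2 + (t : ℝ)) : ℝ × ℝ) ∈ Ψt := hmemZ t y hy
    have hyK : ((y.1, y.2 + (t : ℝ)) : ℝ × ℝ) ∈ K := by
      refine ⟨hy', ?_, ?_⟩
      · exact (hsub hy).1
      · constructor
        · push_cast [ht]; linarith [Int.floor_le y.2]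
        · push_cast [ht]; linarith [Int.lt_floor_add_one y.2]
    have := hC _ hyK
    rw [hiterEquivZ r t y hy] at this
    simp only [Real.norm_eq_abs] at this
    calc |(Ht^[r] y).2 - y.2| = |(Ht^[r] y).2 + (t:ℝ) - (y.2 + (t:ℝ))| := by ring_nf
      _ ≤ C := this
      _ ≤ max C 0 := le_max_left _ _
  -- uniform bound for all iterates below a fixed one
  have hbddAll : ∀ k : ℕ, ∃ C : ℝ, 0 ≤ C ∧ ∀ r < k, ∀ y ∈ Ψt, |(Ht^[r] y).2 - y.2| ≤ C := by
    intro k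
    induction k with
    | zero => exact ⟨0, le_refl _, by omega⟩
    | succ k ih =>
        obtain ⟨C, hC0, hC⟩ := ih
        obtain ⟨D, hD0, hD⟩ := hbdd k
        refine ⟨max C D, le_trans hC0 (le_max_left _ _), ?_⟩
        intro r hr y hy
        rcases Nat.lt_succ_iff_lt_or_eq.mp hr with h | h
        · exact le_trans (hC r h y hy) (le_max_left _ _)
        · subst h; exact le_trans (hD y hy) (le_max_right _ _)
  -- a half-integer is at distance ≥ 1/2 from every integer
  have hhalf : ∀ (m : ℤ), (1:ℝ)/2 ≤ |(m:ℝ) + 1/2| := by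
    intro m
    rcases le_or_gt 0 m with h | h
    · have : (0:ℝ) ≤ (m:ℝ) := by exact_mod_cast h
      rw [abs_of_nonneg (by linarith)]; linarith
    · have hm1 : m ≤ -1 := by omega
      have : (m:ℝ) ≤ -1 := by exact_mod_cast hm1
      rw [abs_of_nonpos (by linarith)]; linarith
  -- rigidity + connectedness: a single integer j works for all y
  have key : ∀ δ : ℝ, 0 < δ → δ < 1/2 →
      ∃ k : ℕ, 0 < k ∧ ∃ j : ℤ, ∀ y ∈ Ψt, |(Ht^[k] y).2 - y.2 - (j:ℝ)| < δ := by
    intro δ hδ hδ2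
    obtain ⟨I, hI⟩ := hrigid δ hδ
    set k := n I with hk
    have hk0 : 0 < k := hpos I
    have hIk := hI I (le_refl I)
    choose jf hjf using hIk
    -- second-coordinate estimate
    have hest : ∀ (y : ℝ × ℝ) (hy : y ∈ Ψt), |(Ht^[k] y).2 - y.2 - (jf y hy : ℝ)| < δ := by
      intro y hy
      have h1 : dist (Ht^[k] y).2 ((y.1, y.2 + (jf y hy : ℝ)) : ℝ × ℝ).2 ≤
          dist (Ht^[k] y) ((y.1, y.2 + (jf y hy : ℝ)) : ℝ × ℝ) := by
        rw [Prod.dist_eq]; exact le_max_right _ _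
      have h2 := lt_of_le_of_lt h1 (hjf y hy)
      rw [Real.dist_eq] at h2
      rw [show ((y.1, y.2 + (jf y hy : ℝ)) : ℝ × ℝ).2 = y.2 + (jf y hy : ℝ) from rfl] at h2
      rwa [sub_sub]
    obtain ⟨y0, hy0⟩ := hne
    refine ⟨k, hk0, jf y0 hy0, ?_⟩
    intro y hy
    -- show jf y hy = jf y0 hy0 by connectedness
    set f : ℝ × ℝ → ℝ := fun y => (Ht^[k] y).2 - y.2 with hf
    have hfc : ContinuousOn f Ψt :=
      (continuous_snd.comp_continuousOn (hiterCont k)).sub continuous_snd.continuousOn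
    have himg : IsConnected (f '' Ψt) := hconn.image f hfc
    have hord : Set.OrdConnected (f '' Ψt) := himg.isPreconnected.ordConnected
    by_contra hne'
    push_neg at hne'
    have hnej : jf y hy ≠ jf y0 hy0 := by
      intro h
      have h1 := hest y hy
      rw [h] at h1
      exact absurd h1 (not_lt.mpr hne')
    set j0 : ℤ := jf y0 hy0
    set j1 : ℤ := jf y hy
    have hmid : ∃ c : ℝ, (∃ m : ℤ, c = (m:ℝ) + 1/2) ∧ c ∈ Set.uIcc (f y0) (f y) := by
      rcases lt_or_gt_of_ne hnej with hlt | hgt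
      · -- j1 < j0, take c = j0 - 1/2
        refine ⟨(j0:ℝ) - 1/2, ⟨j0 - 1, by push_cast; ring⟩, ?_⟩
        have hj1 : (j1:ℝ) + 1 ≤ (j0:ℝ) := by
          exact_mod_cast Int.lt_iff_add_one_le.mp hlt
        have h1 := hest y0 hy0
        have h2 := hest y hy
        rw [abs_lt] at h1 h2
        refine Set.mem_uIcc.mpr (Or.inr ⟨?_, ?_⟩)
        · simp only [hf]; linarith [h2.2]
        · simp only [hf]; linarith [h1.1]
      · -- j1 > j0, take c = j0 + 1/2
        refine ⟨(j0:ℝ) + 1/2, ⟨j0, rfl⟩, ?_⟩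
        have hj1 : (j0:ℝ) + 1 ≤ (j1:ℝ) := by
          exact_mod_cast Int.lt_iff_add_one_le.mp hgt
        have h1 := hest y0 hy0
        have h2 := hest y hy
        rw [abs_lt] at h1 h2
        refine Set.mem_uIcc.mpr (Or.inl ⟨?_, ?_⟩)
        · simp only [hf]; linarith [h1.2]
        · simp only [hf]; linarith [h2.1]
    obtain ⟨c, ⟨m, hm⟩, hc⟩ := hmid
    have hcimg : c ∈ f '' Ψt :=
      hord.uIcc_subset ⟨y0, hy0, rfl⟩ ⟨y, hy, rfl⟩ hc
    obtain ⟨z, hz, hfz⟩ := hcimg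
    have h3 := hest z hz
    have hfz' : (Ht^[k] z).2 - z.2 = c := hfz
    have h4 : |c - (jf z hz : ℝ)| < δ := by rw [← hfz']; exact h3
    have h5 : (1:ℝ)/2 ≤ |c - (jf z hz : ℝ)| := by
      have := hhalf (m - jf z hz)
      rw [hm]
      convert this using 2
      push_cast
      ring
    linarith
  -- PART 1
  have part1 : ∀ ε > (0:ℝ), ∃ N : ℕ, 0 < N ∧ ∃ αε : ℝ, ∀ m ≥ N, ∀ y ∈ Ψt,
      |((Ht^[m] y).2 - y.2) / (m : ℝ) - αε| < ε := by
    intro ε hε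
    set δ := min (ε/2) (1/4) with hδdef
    have hδ0 : 0 < δ := lt_min (by linarith) (by norm_num)
    have hδhalf : δ < 1/2 := lt_of_le_of_lt (min_le_right _ _) (by norm_num)
    have hδε : δ ≤ ε/2 := min_le_left _ _
    obtain ⟨k, hk0, j, hj⟩ := key δ hδ0 hδhalf
    obtain ⟨C, hC0, hC⟩ := hbddAll k
    -- telescoping estimate over blocks of length k
    have htel : ∀ q : ℕ, ∀ y ∈ Ψt,
        |(Ht^[q*k] y).2 - y.2 - (q:ℝ)*(j:ℝ)| ≤ (q:ℝ)*δ := by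
      intro q
      induction q with
      | zero => intro y hy; simp
      | succ q ih =>
          intro y hy
          have hs : (q+1)*k = q*k + k := by ring
          rw [hs, hφadd (q*k) k y]
          have h1 := ih _ (hiterMaps k hy)
          have h2 := hj y hy
          have e : (Ht^[q*k] (Ht^[k] y)).2 - (Ht^[k] y).2 + ((Ht^[k] y).2 - y.2)
              - ((q:ℕ)+1 : ℕ) * (j:ℝ)
              = ((Ht^[q*k] (Ht^[k] y)).2 - (Ht^[k] y).2 - (q:ℝ)*(j:ℝ))
                + (((Ht^[k] y).2 - y.2) - (j:ℝ)) := by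
            push_cast; ring
          rw [e]
          have tri := abs_add_le ((Ht^[q*k] (Ht^[k] y)).2 - (Ht^[k] y).2 - (q:ℝ)*(j:ℝ))
            (((Ht^[k] y).2 - y.2) - (j:ℝ))
          push_cast
          linarith
    obtain ⟨N0, hN0⟩ := exists_nat_gt ((C + |(j:ℝ)| + 1) / (ε/2))
    refine ⟨max N0 1, lt_of_lt_of_le one_pos (le_max_right _ _), (j:ℝ)/(k:ℝ), ?_⟩
    intro m hm y hy
    set q := m / k with hq
    set r := m % k with hr
    have hmk : k * q + r = m := Nat.div_add_mod m k
    have hrk : r < k := Nat.mod_lt _ hk0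
    have hm1 : 1 ≤ m := le_trans (le_max_right _ _) hm
    have hsplit : m = q*k + r := by rw [mul_comm q k]; exact hmk.symm
    have hφm : (Ht^[m] y).2 - y.2
        = ((Ht^[q*k] (Ht^[r] y)).2 - (Ht^[r] y).2) + ((Ht^[r] y).2 - y.2) := by
      conv_lhs => rw [hsplit]
      exact hφadd (q*k) r y
    have h1 := htel q _ (hiterMaps r hy)
    have h2 := hC r hrk y hy
    have key1 : |(Ht^[m] y).2 - y.2 - (q:ℝ)*(j:ℝ)| ≤ (q:ℝ)*δ + C := by
      rw [hφm]
      have e : (Ht^[q*k] (Ht^[r] y)).2 - (Ht^[r] y).2 + ((Ht^[r] y).2 - y.2) - (q:ℝ)*(j:ℝ)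
          = ((Ht^[q*k] (Ht^[r] y)).2 - (Ht^[r] y).2 - (q:ℝ)*(j:ℝ)) + ((Ht^[r] y).2 - y.2) := by
        ring
      rw [e]
      have tri := abs_add_le ((Ht^[q*k] (Ht^[r] y)).2 - (Ht^[r] y).2 - (q:ℝ)*(j:ℝ))
        ((Ht^[r] y).2 - y.2)
      have h2' : |(Ht^[r] y).2 - y.2| ≤ C := h2
      linarith
    have hk0' : (0:ℝ) < k := by exact_mod_cast hk0
    have hm0' : (0:ℝ) < m := by exact_mod_cast hm1
    have hqk : (q:ℝ)*(k:ℝ) + (r:ℝ) = (m:ℝ) := by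
      have : (q*k + r : ℕ) = m := hsplit.symm
      exact_mod_cast this
    have hrk' : (r:ℝ) < (k:ℝ) := by exact_mod_cast hrk
    have hr0 : (0:ℝ) ≤ (r:ℝ) := Nat.cast_nonneg r
    have hqm : (q:ℝ) ≤ (m:ℝ) := by exact_mod_cast Nat.div_le_self m k
    -- rewrite the difference as a single fraction
    have e2 : ((Ht^[m] y).2 - y.2)/(m:ℝ) - (j:ℝ)/(k:ℝ)
        = (((Ht^[m] y).2 - y.2) * (k:ℝ) - (j:ℝ)*(m:ℝ))/((m:ℝ)*(k:ℝ)) := by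
      field_simp
    have e3 : ((Ht^[m] y).2 - y.2) * (k:ℝ) - (j:ℝ)*(m:ℝ)
        = ((Ht^[m] y).2 - y.2 - (q:ℝ)*(j:ℝ))*(k:ℝ) - (j:ℝ)*(r:ℝ) := by
      rw [← hqk]; ring
    have hnum : |((Ht^[m] y).2 - y.2) * (k:ℝ) - (j:ℝ)*(m:ℝ)|
        ≤ ((q:ℝ)*δ + C)*(k:ℝ) + |(j:ℝ)| * (k:ℝ) := by
      rw [e3, sub_eq_add_neg]
      refine le_trans (abs_add_le _ _) ?_
      have a1 : |((Ht^[m] y).2 - y.2 - (q:ℝ)*(j:ℝ))*(k:ℝ)| ≤ ((q:ℝ)*δ + C)*(k:ℝ) := by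
        rw [abs_mul, abs_of_pos hk0']
        exact mul_le_mul_of_nonneg_right key1 (le_of_lt hk0')
      have a2 : |-((j:ℝ)*(r:ℝ))| ≤ |(j:ℝ)| * (k:ℝ) := by
        rw [abs_neg, abs_mul, abs_of_nonneg hr0]
        exact mul_le_mul_of_nonneg_left (le_of_lt hrk') (abs_nonneg _)
      linarith
    have hfrac : |((Ht^[m] y).2 - y.2)/(m:ℝ) - (j:ℝ)/(k:ℝ)|
        ≤ ((q:ℝ)*δ + C + |(j:ℝ)|)/(m:ℝ) := by
      rw [e2, abs_div, abs_of_pos (mul_pos hm0' hk0')]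
      calc |((Ht^[m] y).2 - y.2) * (k:ℝ) - (j:ℝ)*(m:ℝ)| / ((m:ℝ)*(k:ℝ))
          ≤ (((q:ℝ)*δ + C + |(j:ℝ)|)*(k:ℝ)) / ((m:ℝ)*(k:ℝ)) := by
            exact div_le_div_of_nonneg_right (by linarith [hnum]) (mul_pos hm0' hk0').le
        _ = ((q:ℝ)*δ + C + |(j:ℝ)|)/(m:ℝ) := by
            rw [mul_comm (m:ℝ) (k:ℝ), ← div_div]
            rw [mul_div_assoc]
            rw [div_self (ne_of_gt hk0')]
            ring
    have hbound1 : (q:ℝ)*δ/(m:ℝ) ≤ δ := by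
      rw [div_le_iff₀ hm0']
      have := mul_le_mul_of_nonneg_right hqm hδ0.le
      linarith
    have hbound2 : (C + |(j:ℝ)|)/(m:ℝ) < ε/2 := by
      rw [div_lt_iff₀ hm0']
      have hNm : (N0:ℝ) ≤ (m:ℝ) := by
        exact_mod_cast le_trans (le_max_left N0 1) hm
      have h5 := (div_lt_iff₀ (by linarith : (0:ℝ) < ε/2)).mp hN0
      have h6 : (N0:ℝ) * (ε/2) ≤ (m:ℝ) * (ε/2) :=
        mul_le_mul_of_nonneg_right hNm (by linarith)
      linarith
    have : ((q:ℝ)*δ + C + |(j:ℝ)|)/(m:ℝ) = (q:ℝ)*δ/(m:ℝ) + (C + |(j:ℝ)|)/(m:ℝ) := by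
      ring
    rw [this] at hfrac
    calc |((Ht^[m] y).2 - y.2)/(m:ℝ) - (j:ℝ)/(k:ℝ)| ≤ (q:ℝ)*δ/(m:ℝ) + (C + |(j:ℝ)|)/(m:ℝ) := hfrac
      _ < δ + ε/2 := by linarith
      _ ≤ ε := by linarith
  refine ⟨part1, ?_⟩
  -- PART 2: existence of the rotation number
  have hsmall : ∀ (c : ℝ), 0 < c → ∃ P : ℕ, ∀ p ≥ P, 1/((p:ℝ)+1) < c := by
    intro c hc
    obtain ⟨P, hP⟩ := exists_nat_gt (1/c)
    refine ⟨P, fun p hp => ?_⟩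
    have h1 : (1:ℝ)/c < (p:ℝ)+1 := by
      have : (P:ℝ) ≤ p := by exact_mod_cast hp
      linarith
    rw [div_lt_iff₀ (by positivity)]
    rw [div_lt_iff₀ hc] at h1
    nlinarith
  have hP : ∀ p : ℕ, ∃ N : ℕ, 0 < N ∧ ∃ β : ℝ, ∀ m ≥ N, ∀ y ∈ Ψt,
      |((Ht^[m] y).2 - y.2)/(m:ℝ) - β| < 1/((p:ℝ)+1) :=
    fun p => part1 (1/((p:ℝ)+1)) (by positivity)
  choose Nf hNfpos β hβ using hP
  obtain ⟨y0, hy0⟩ := hne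
  have hcauchy : CauchySeq β := by
    rw [Metric.cauchySeq_iff]
    intro ε hε
    obtain ⟨P, hPε⟩ := hsmall (ε/2) (by linarith)
    refine ⟨P, ?_⟩
    intro p hp p' hp'
    set m := max (Nf p) (Nf p') with hm
    have h1 := hβ p m (le_max_left _ _) y0 hy0
    have h2 := hβ p' m (le_max_right _ _) y0 hy0
    rw [Real.dist_eq]
    have tri : |β p - β p'| ≤ |β p - ((Ht^[m] y0).2 - y0.2)/(m:ℝ)|
        + |((Ht^[m] y0).2 - y0.2)/(m:ℝ) - β p'| := abs_sub_le _ _ _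
    rw [abs_sub_comm (β p) (((Ht^[m] y0).2 - y0.2)/(m:ℝ))] at tri
    have e1 := hPε p hp
    have e2 := hPε p' hp'
    linarith
  obtain ⟨α, hα⟩ := cauchySeq_tendsto_of_complete hcauchy
  refine ⟨α, ?_⟩
  intro y hy
  rw [Metric.tendsto_atTop]
  intro ε hε
  obtain ⟨p1, hp1⟩ := hsmall (ε/3) (by linarith)
  obtain ⟨p0, hp0⟩ := Metric.tendsto_atTop.mp hα (ε/3) (by linarith)
  set p := max p0 p1 with hpdef
  refine ⟨Nf p, ?_⟩
  intro m hm
  have h1 := hβ p m hm y hy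
  have h2 := hp0 p (le_max_left _ _)
  have h3 := hp1 p (le_max_right _ _)
  rw [Real.dist_eq] at h2 ⊢
  have tri : |((Ht^[m] y).2 - y.2)/(m:ℝ) - α|
      ≤ |((Ht^[m] y).2 - y.2)/(m:ℝ) - β p| + |β p - α| := abs_sub_le _ _ _
  linarith
end

section
/- Let X be the inverse limit of a sequence of compact metric spaces X_i with continuous surjective bonding maps f_i : X_{i+1} → X_i, and let h : X → X be the homeomorphism induced by homeomorphisms h_i : X_i → X_i commuting with the bonding maps, i.e., h((x_i)) = (h_i(x_i)). Then h is topologically weakly mixing if and only if every h_i is topologically weakly mixing. -/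
section aux
variable {X : ℕ → Type*}

def castX (X : ℕ → Type*) {m n : ℕ} (e : m = n) (z : X m) : X n :=
  cast (congrArg X e) z

lemma castX_apply (X : ℕ → Type*) (x : ∀ i, X i) {m n : ℕ} (e : m = n) :
    castX X e (x m) = x n := by subst e; rfl

lemma castX_rfl (X : ℕ → Type*) {m : ℕ} (e : m = m) (z : X m) : castX X e z = z :=
  cast_eq _ z

lemma castX_castX (X : ℕ → Type*) {a b c : ℕ} (e1 : a = b) (e2 : b = c) (z : X a) :
    castX X e2 (castX X e1 z) = castX X (e1.trans e2) z := by
  subst e1; subst e2; rfl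

lemma continuous_castX (X : ℕ → Type*) [∀ i, TopologicalSpace (X i)] {m n : ℕ} (e : m = n) :
    Continuous (castX X e) := by subst e; exact continuous_id

lemma castX_f (f : ∀ i, X (i+1) → X i) {m n : ℕ} (e : m = n) (e' : m + 1 = n + 1)
    (z : X (m+1)) : f n (castX X e' z) = castX X e (f m z) := by
  subst e; rw [castX_rfl, castX_rfl]

def bondAux (f : ∀ i, X (i+1) → X i) (i : ℕ) : ∀ k, X (i + k) → X i
  | 0, z => z
  | k+1, z => bondAux f i k (f (i+k) z)

lemma bondAux_continuous [∀ i, TopologicalSpace (X i)] (f : ∀ i, X (i+1) → X i)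
    (hfc : ∀ i, Continuous (f i)) (i : ℕ) : ∀ k, Continuous (bondAux f i k)
  | 0 => continuous_id
  | k+1 => (bondAux_continuous f hfc i k).comp (hfc (i+k))

lemma bondAux_thread (f : ∀ i, X (i+1) → X i) (x : ∀ i, X i)
    (hx : ∀ i, f i (x (i+1)) = x i) (i : ℕ) : ∀ k, bondAux f i k (x (i+k)) = x i
  | 0 => rfl
  | k+1 => by
      show bondAux f i k (f (i+k) (x (i+k+1))) = x i
      rw [hx (i+k)]
      exact bondAux_thread f x hx i k

lemma f_bondAux (f : ∀ i, X (i+1) → X i) (i : ℕ) :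
    ∀ (k : ℕ) (z : X (i + 1 + k)),
      f i (bondAux f (i+1) k z) = bondAux f i (k+1) (castX X (by omega : i+1+k = i+(k+1)) z)
  | 0, z => by
      show f i z = f (i+0) (castX X _ z)
      rw [castX_rfl]
      rfl
  | k+1, z => by
      show f i (bondAux f (i+1) k (f (i+1+k) z)) = bondAux f i (k+1) (f (i+(k+1)) (castX X _ z))
      rw [castX_f f (by omega : i+1+k = i+(k+1))]
      exact f_bondAux f i k (f (i+1+k) z)

noncomputable def tailSeq (f : ∀ i, X (i+1) → X i) (hfs : ∀ i, Function.Surjective (f i))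
    (j : ℕ) (x : X j) : ∀ k, X (j + k)
  | 0 => x
  | k+1 => (hfs (j+k) (tailSeq f hfs j x k)).choose

lemma tailSeq_spec (f : ∀ i, X (i+1) → X i) (hfs : ∀ i, Function.Surjective (f i))
    (j : ℕ) (x : X j) (k : ℕ) :
    f (j+k) (tailSeq f hfs j x (k+1)) = tailSeq f hfs j x k :=
  (hfs (j+k) (tailSeq f hfs j x k)).choose_spec

lemma thread_through (f : ∀ i, X (i+1) → X i) (hfs : ∀ i, Function.Surjective (f i))
    (j : ℕ) (x : X j) :
    ∃ y : {x : ∀ i, X i // ∀ i, f i (x (i+1)) = x i}, y.1 j = x := by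
  have hthread : ∀ i, f i (bondAux f (i+1) j
      (castX X (Nat.add_comm j (i+1)) (tailSeq f hfs j x (i+1)))) =
      bondAux f i j (castX X (Nat.add_comm j i) (tailSeq f hfs j x i)) := by
    intro i
    rw [f_bondAux f i j, castX_castX]
    show bondAux f i j (f (i+j) (castX X _ (tailSeq f hfs j x (i+1)))) = _
    rw [castX_f f (Nat.add_comm j i), tailSeq_spec f hfs j x i]
  have hbond : ∀ k, bondAux f j k (tailSeq f hfs j x k) = x := by
    intro k
    induction k with
    | zero => rfl
    | succ k ih =>
        show bondAux f j k (f (j+k) (tailSeq f hfs j x (k+1))) = x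
        rw [tailSeq_spec f hfs j x k]
        exact ih
  refine ⟨⟨fun i => bondAux f i j (castX X (Nat.add_comm j i) (tailSeq f hfs j x i)),
    hthread⟩, ?_⟩
  show bondAux f j j (castX X (Nat.add_comm j j) (tailSeq f hfs j x j)) = x
  rw [castX_rfl]
  exact hbond j

lemma open_basic [∀ i, TopologicalSpace (X i)] (f : ∀ i, X (i+1) → X i)
    (hfc : ∀ i, Continuous (f i))
    (U : Set {x : ∀ i, X i // ∀ i, f i (x (i+1)) = x i}) (hU : IsOpen U)
    (x : {x : ∀ i, X i // ∀ i, f i (x (i+1)) = x i}) (hx : x ∈ U) :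
    ∃ j : ℕ, ∀ N, j ≤ N → ∃ W : Set (X N), IsOpen W ∧ x.1 N ∈ W ∧
      ∀ y : {x : ∀ i, X i // ∀ i, f i (x (i+1)) = x i}, y.1 N ∈ W → y ∈ U := by
  obtain ⟨V, hVopen, hVeq⟩ := isOpen_induced_iff.mp hU
  have hxV : x.1 ∈ V := by rw [← hVeq] at hx; exact hx
  obtain ⟨I, u, hu, hsub⟩ := isOpen_pi_iff.mp hVopen x.1 hxV
  refine ⟨I.sup id, fun N hN => ?_⟩
  have hle : ∀ i ∈ I, i ≤ N := fun i hi => le_trans (Finset.le_sup (f := id) hi) hN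
  have hval : ∀ (y : {x : ∀ i, X i // ∀ i, f i (x (i+1)) = x i}) (i : ℕ) (hi : i ≤ N),
      bondAux f i (N - i) (castX X (Nat.add_sub_cancel' hi).symm (y.1 N)) = y.1 i := by
    intro y i hi
    rw [castX_apply X y.1]
    exact bondAux_thread f y.1 y.2 i (N - i)
  refine ⟨⋂ i : I, (fun z : X N =>
      bondAux f i (N - i) (castX X (Nat.add_sub_cancel' (hle i i.2)).symm z)) ⁻¹' (u i),
      ?_, ?_, ?_⟩
  · exact isOpen_iInter_of_finite fun i =>
      ((hu i i.2).1).preimage ((bondAux_continuous f hfc i _).comp (continuous_castX X _))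
  · refine Set.mem_iInter.mpr fun i => ?_
    show bondAux f i (N - i) (castX X _ (x.1 N)) ∈ u i
    rw [hval x i (hle i i.2)]
    exact (hu i i.2).2
  · intro y hyW
    have : y.1 ∈ (I : Set ℕ).pi u := by
      intro i hi
      have h2 := Set.mem_iInter.mp hyW ⟨i, hi⟩
      rw [← hval y i (hle i hi)]
      exact h2
    have : y.1 ∈ V := hsub this
    rw [← hVeq]
    exact this

end aux

/-- Topological weak mixing: the product system is topologically transitive. -/
def IsWeaklyMixing {X : Type*} [TopologicalSpace X] (g : X → X) : Prop :=
  ∀ U₁ V₁ U₂ V₂ : Set X, IsOpen U₁ → IsOpen V₁ → IsOpen U₂ → IsOpen V₂ →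
    U₁.Nonempty → V₁.Nonempty → U₂.Nonempty → V₂.Nonempty →
    ∃ n : ℕ, (g^[n] '' U₁ ∩ V₁).Nonempty ∧ (g^[n] '' U₂ ∩ V₂).Nonempty

/-- part of Proposition 9.1: Let `X` be the inverse limit of compact metric
spaces `X i` with continuous surjective bonding maps `f i : X (i+1) → X i`, and let
`H : X → X` be the homeomorphism induced coordinatewise by homeomorphisms `h i`
commuting with the bonding maps.  Then `H` is topologically weakly mixing iff every
`h i` is topologically weakly mixing. -/
theorem pseudo_suspension_stmt4
    {X : ℕ → Type*} [∀ i, MetricSpace (X i)] [∀ i, CompactSpace (X i)]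
    (f : ∀ i, X (i + 1) → X i)
    (hfc : ∀ i, Continuous (f i)) (hfs : ∀ i, Function.Surjective (f i))
    (h : ∀ i, X i ≃ₜ X i)
    (hcomm : ∀ i (x : X (i + 1)), f i (h (i + 1) x) = h i (f i x))
    (H : {x : ∀ i, X i // ∀ i, f i (x (i + 1)) = x i} →
         {x : ∀ i, X i // ∀ i, f i (x (i + 1)) = x i})
    (hH : ∀ x i, (H x).1 i = h i (x.1 i)) :
    IsWeaklyMixing H ↔ ∀ i, IsWeaklyMixing (⇑(h i)) := by
  have hHiter : ∀ (n : ℕ) x (i : ℕ), (H^[n] x).1 i = (h i)^[n] (x.1 i) := by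
    intro n
    induction n with
    | zero => intro x i; rfl
    | succ n ih =>
        intro x i
        rw [Function.iterate_succ_apply', Function.iterate_succ_apply', hH, ih]
  constructor
  · intro hWM i U₁ V₁ U₂ V₂ hU₁ hV₁ hU₂ hV₂ hneU₁ hneV₁ hneU₂ hneV₂
    have hπc : Continuous (fun y : {x : ∀ i, X i // ∀ i, f i (x (i+1)) = x i} => y.1 i) :=
      (continuous_apply i).comp continuous_subtype_val
    have hne : ∀ (S : Set (X i)), S.Nonempty →
        ((fun y : {x : ∀ i, X i // ∀ i, f i (x (i+1)) = x i} => y.1 i) ⁻¹' S).Nonempty := by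
      rintro S ⟨a, ha⟩
      obtain ⟨y, hy⟩ := thread_through f hfs i a
      exact ⟨y, by rw [Set.mem_preimage, hy]; exact ha⟩
    obtain ⟨n, ⟨z₁, hz₁⟩, ⟨z₂, hz₂⟩⟩ := hWM _ _ _ _ (hU₁.preimage hπc) (hV₁.preimage hπc)
      (hU₂.preimage hπc) (hV₂.preimage hπc) (hne _ hneU₁) (hne _ hneV₁) (hne _ hneU₂)
      (hne _ hneV₂)
    refine ⟨n, ⟨z₁.1 i, ?_, hz₁.2⟩, ⟨z₂.1 i, ?_, hz₂.2⟩⟩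
    · obtain ⟨w, hw, hwz⟩ := hz₁.1
      exact ⟨w.1 i, hw, by rw [← hwz, hHiter]⟩
    · obtain ⟨w, hw, hwz⟩ := hz₂.1
      exact ⟨w.1 i, hw, by rw [← hwz, hHiter]⟩
  · intro hwm U₁ V₁ U₂ V₂ hU₁ hV₁ hU₂ hV₂ hneU₁ hneV₁ hneU₂ hneV₂
    obtain ⟨x₁, hx₁⟩ := hneU₁
    obtain ⟨y₁, hy₁⟩ := hneV₁
    obtain ⟨x₂, hx₂⟩ := hneU₂
    obtain ⟨y₂, hy₂⟩ := hneV₂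
    obtain ⟨j₁, hj₁⟩ := open_basic f hfc U₁ hU₁ x₁ hx₁
    obtain ⟨j₂, hj₂⟩ := open_basic f hfc V₁ hV₁ y₁ hy₁
    obtain ⟨j₃, hj₃⟩ := open_basic f hfc U₂ hU₂ x₂ hx₂
    obtain ⟨j₄, hj₄⟩ := open_basic f hfc V₂ hV₂ y₂ hy₂
    set N := j₁ + j₂ + j₃ + j₄ with hN
    obtain ⟨A₁, hA₁o, hA₁m, hA₁s⟩ := hj₁ N (by omega)
    obtain ⟨B₁, hB₁o, hB₁m, hB₁s⟩ := hj₂ N (by omega)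
    obtain ⟨A₂, hA₂o, hA₂m, hA₂s⟩ := hj₃ N (by omega)
    obtain ⟨B₂, hB₂o, hB₂m, hB₂s⟩ := hj₄ N (by omega)
    obtain ⟨n, ⟨z₁, ⟨a₁, ha₁, ha₁z⟩, hz₁B⟩, ⟨z₂, ⟨a₂, ha₂, ha₂z⟩, hz₂B⟩⟩ :=
      hwm N A₁ B₁ A₂ B₂ hA₁o hB₁o hA₂o hB₂o ⟨_, hA₁m⟩ ⟨_, hB₁m⟩ ⟨_, hA₂m⟩ ⟨_, hB₂m⟩
    obtain ⟨w₁, hw₁⟩ := thread_through f hfs N a₁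
    obtain ⟨w₂, hw₂⟩ := thread_through f hfs N a₂
    refine ⟨n, ⟨H^[n] w₁, ⟨w₁, hA₁s w₁ (by rw [hw₁]; exact ha₁), rfl⟩, ?_⟩,
      ⟨H^[n] w₂, ⟨w₂, hA₂s w₂ (by rw [hw₂]; exact ha₂), rfl⟩, ?_⟩⟩
    · exact hB₁s _ (by rw [hHiter, hw₁, ha₁z]; exact hz₁B)
    · exact hB₂s _ (by rw [hHiter, hw₂, ha₂z]; exact hz₂B)
end

section
/- Let X be the inverse limit of compact metric spaces X_i with continuous surjective bonding maps f_i : X_{i+1} → X_i, and let h : X → X be induced coordinatewise by homeomorphisms h_i : X_i → X_i. Then h is uniformly rigid if and only if every h_i is uniformly rigid. Moreover, for the forward direction one must use that for each ε > 0 there exist N and ε_N > 0 such that if two threads agree to within ε_N in their N-th coordinate, then they are within ε of each other in X; the uniform rigidity of h_N then supplies arbitrarily large k with h_N^k within ε_N of the identity, whence h^k is within ε of the identity. -/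
open Filter Topology Set

universe u

/-- A self-map `g` of a uniform space is uniformly rigid if some subsequence of its
iterates converges uniformly to the identity. -/
def IsUniformlyRigid {X : Type*} [UniformSpace X] (g : X → X) : Prop :=
  ∃ n : ℕ → ℕ, StrictMono n ∧
    TendstoUniformly (fun j x => g^[n j] x) id Filter.atTop


private lemma thread_exists' : ∀ (N : ℕ) {Y : ℕ → Type u} (ff : ∀ i, Y (i+1) → Y i),
    (∀ i, Function.Surjective (ff i)) → ∀ a : Y N,
    ∃ x : ∀ i, Y i, (∀ i, ff i (x (i+1)) = x i) ∧ x N = a := by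
  intro N
  induction N with
  | zero =>
    intro Y ff hfs a
    choose g hg using hfs
    exact ⟨fun j => Nat.rec a (fun j z => g j z) j, fun j => hg j _, rfl⟩
  | succ N ih =>
    intro Y ff hfs a
    obtain ⟨x', hx', hN⟩ := ih (Y := fun i => Y (i+1)) (fun i => ff (i+1)) (fun i => hfs (i+1)) a
    refine ⟨fun i => Nat.casesOn i (ff 0 (x' 0)) x', ?_, hN⟩
    intro i
    cases i with
    | zero => rfl
    | succ j => exact hx' j

private def dropMap {X : ℕ → Type u} (f : ∀ i, X (i+1) → X i) (i : ℕ) : ∀ k, X (i + k) → X i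
  | 0 => id
  | (k+1) => fun z => dropMap f i k (f (i+k) z)

private lemma dropMap_continuous {X : ℕ → Type u} [∀ i, TopologicalSpace (X i)]
    (f : ∀ i, X (i+1) → X i) (hfc : ∀ i, Continuous (f i)) (i : ℕ) (k : ℕ) :
    Continuous (dropMap f i k) := by
  induction k with
  | zero => exact continuous_id
  | succ k ih => exact ih.comp (hfc (i+k))

private lemma dropMap_thread {X : ℕ → Type u} (f : ∀ i, X (i+1) → X i)
    (x : ∀ i, X i) (hx : ∀ i, f i (x (i+1)) = x i) (i : ℕ) :
    ∀ k, dropMap f i k (x (i+k)) = x i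
  | 0 => rfl
  | (k+1) => by
      show dropMap f i k (f (i+k) (x (i+k+1))) = x i
      rw [hx (i+k)]
      exact dropMap_thread f x hx i k

private lemma coord_control {X : ℕ → Type u} [∀ i, MetricSpace (X i)] [∀ i, CompactSpace (X i)]
    (f : ∀ i, X (i+1) → X i) (hfc : ∀ i, Continuous (f i))
    {i N : ℕ} (hiN : i ≤ N) {ε : ℝ} (hε : 0 < ε) :
    ∃ δ > 0, ∀ x y : {x : ∀ i, X i // ∀ i, f i (x (i + 1)) = x i},
      dist (x.1 N) (y.1 N) < δ → dist (x.1 i) (y.1 i) < ε := by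
  obtain ⟨k, rfl⟩ := Nat.le.dest hiN
  have hc : UniformContinuous (dropMap f i k) :=
    CompactSpace.uniformContinuous_of_continuous (dropMap_continuous f hfc i k)
  rw [Metric.uniformContinuous_iff] at hc
  obtain ⟨δ, hδ, hδ'⟩ := hc ε hε
  refine ⟨δ, hδ, fun x y hxy => ?_⟩
  rw [← dropMap_thread f x.1 x.2 i k, ← dropMap_thread f y.1 y.2 i k]
  exact hδ' hxy

/-- part of Proposition 9.1: Let `X` be the inverse limit of compact metric
spaces `X i` with continuous surjective bonding maps `f i : X (i+1) → X i`, and let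
`H : X → X` be the homeomorphism induced coordinatewise by homeomorphisms `h i`
commuting with the bonding maps.  Then `H` is uniformly rigid iff every `h i` is
uniformly rigid.  (The inverse limit carries the uniformity induced from the countable
product, equivalently the metric `d(x,y) = Σ 2^{-i} d_i(x_i,y_i)`; two threads agreeing
to within `ε_N` in the `N`-th coordinate are within `ε` of each other in `X`.) -/
theorem pseudo_suspension_stmt6
    {X : ℕ → Type*} [∀ i, MetricSpace (X i)] [∀ i, CompactSpace (X i)]
    (f : ∀ i, X (i + 1) → X i)
    (hfc : ∀ i, Continuous (f i)) (hfs : ∀ i, Function.Surjective (f i))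
    (h : ∀ i, X i ≃ₜ X i)
    (hcomm : ∀ i (x : X (i + 1)), f i (h (i + 1) x) = h i (f i x))
    (H : {x : ∀ i, X i // ∀ i, f i (x (i + 1)) = x i} →
         {x : ∀ i, X i // ∀ i, f i (x (i + 1)) = x i})
    (hH : ∀ x i, (H x).1 i = h i (x.1 i)) :
    IsUniformlyRigid H ↔ ∀ i, IsUniformlyRigid (⇑(h i)) := by
  -- iterate formula
  have hiter : ∀ (k : ℕ) (x : {x : ∀ i, X i // ∀ i, f i (x (i + 1)) = x i}) (i : ℕ),
      (H^[k] x).1 i = (h i)^[k] (x.1 i) := by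
    intro k
    induction k with
    | zero => intro x i; rfl
    | succ k ih =>
      intro x i
      rw [Function.iterate_succ_apply', Function.iterate_succ_apply', hH, ih]
  -- surjectivity of the projections
  have hsurj : ∀ (N : ℕ) (a : X N),
      ∃ x : {x : ∀ i, X i // ∀ i, f i (x (i + 1)) = x i}, x.1 N = a := by
    intro N a
    obtain ⟨x, hx, hxa⟩ := thread_exists' N f hfs a
    exact ⟨⟨x, hx⟩, hxa⟩
  -- projections are uniformly continuous
  have hproj : ∀ i : ℕ,
      UniformContinuous (fun x : {x : ∀ i, X i // ∀ i, f i (x (i + 1)) = x i} => x.1 i) :=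
    fun i => (Pi.uniformContinuous_proj X i).comp uniformContinuous_subtype_val
  constructor
  · rintro ⟨n, hn, htu⟩ i
    refine ⟨n, hn, ?_⟩
    rw [Metric.tendstoUniformly_iff]
    intro ε hε
    have hV := Filter.mem_map.mp ((hproj i) (Metric.dist_mem_uniformity hε))
    filter_upwards [htu _ hV] with j hj b
    obtain ⟨x, rfl⟩ := hsurj i b
    have hx := hj x
    simp only [Set.mem_preimage, Set.mem_setOf_eq, id_eq] at hx
    rw [hiter] at hx
    simpa using hx
  · intro hri
    -- key: every entourage contains a "single coordinate" entourage
    have key : ∀ W ∈ uniformity {x : ∀ i, X i // ∀ i, f i (x (i + 1)) = x i},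
        ∃ (N : ℕ) (δ : ℝ), 0 < δ ∧
        ∀ x y : {x : ∀ i, X i // ∀ i, f i (x (i + 1)) = x i},
          dist (x.1 N) (y.1 N) < δ → (x, y) ∈ W := by
      intro W hW
      rw [uniformity_subtype, Filter.mem_comap] at hW
      obtain ⟨W', hW', hWsub⟩ := hW
      rw [Pi.uniformity, Filter.mem_iInf'] at hW'
      obtain ⟨I, hIfin, V, hV, hVuniv, -, hWeq⟩ := hW'
      obtain ⟨N, hN⟩ := hIfin.bddAbove
      have hSi : ∀ i : ℕ, ∃ δ > 0,
          ∀ x y : {x : ∀ i, X i // ∀ i, f i (x (i + 1)) = x i},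
            dist (x.1 N) (y.1 N) < δ →
            ((x.1, y.1) : (∀ i, X i) × (∀ i, X i)) ∈ V i := by
        intro i
        by_cases hi : i ∈ I
        · have hiN : i ≤ N := hN hi
          have hVi := hV i
          rw [Filter.mem_comap] at hVi
          obtain ⟨U', hU', hU'sub⟩ := hVi
          rw [Metric.mem_uniformity_dist] at hU'
          obtain ⟨ε, hε, hball⟩ := hU'
          obtain ⟨δ, hδ, hcc⟩ := coord_control f hfc hiN hε
          exact ⟨δ, hδ, fun x y hxy => hU'sub (hball (hcc x y hxy))⟩
        · exact ⟨1, one_pos, fun x y _ => by rw [hVuniv i hi]; trivial⟩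
      choose δf hδf hδf' using hSi
      have hne : (Finset.range (N+1)).Nonempty := ⟨0, Finset.mem_range.mpr (Nat.succ_pos N)⟩
      refine ⟨N, (Finset.range (N+1)).inf' hne δf, ?_, ?_⟩
      · rw [Finset.lt_inf'_iff]
        exact fun i _ => hδf i
      · intro x y hxy
        apply hWsub
        show (x.1, y.1) ∈ W'
        rw [hWeq, Set.mem_iInter]
        intro i
        by_cases hiN : i ≤ N
        · exact hδf' i x y (lt_of_lt_of_le hxy
            (Finset.inf'_le δf (Finset.mem_range.mpr (Nat.lt_succ_of_le hiN))))
        · have hi : i ∉ I := fun hi => hiN (hN hi)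
          rw [hVuniv i hi]; trivial
    -- per-entourage rigidity with arbitrarily large exponents
    have PE : ∀ W ∈ uniformity {x : ∀ i, X i // ∀ i, f i (x (i + 1)) = x i}, ∀ m : ℕ,
        ∃ k, m ≤ k ∧ ∀ x : {x : ∀ i, X i // ∀ i, f i (x (i + 1)) = x i},
          (x, H^[k] x) ∈ W := by
      intro W hW m
      obtain ⟨N, δ, hδ, hWin⟩ := key W hW
      obtain ⟨s, hsm, hstu⟩ := hri N
      rw [Metric.tendstoUniformly_iff] at hstu
      have h1 := hstu δ hδ
      have h2 : ∀ᶠ j in atTop, m ≤ s j := hsm.tendsto_atTop.eventually_ge_atTop m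
      obtain ⟨j, hj1, hj2⟩ := (h1.and h2).exists
      refine ⟨s j, hj2, fun x => hWin x _ ?_⟩
      rw [hiter]
      simpa using hj1 (x.1 N)
    -- countable antitone basis of the uniformity
    haveI hcg : (uniformity {x : ∀ i, X i // ∀ i, f i (x (i + 1)) = x i}).IsCountablyGenerated := by
      have h1 : (uniformity (∀ i, X i)).IsCountablyGenerated := by
        rw [Pi.uniformity]; infer_instance
      rw [uniformity_subtype]
      exact Filter.comap.isCountablyGenerated _ _
    obtain ⟨U, hU⟩ :=
      (uniformity {x : ∀ i, X i // ∀ i, f i (x (i + 1)) = x i}).exists_antitone_basis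
    have PE' : ∀ (j m : ℕ), ∃ k, m ≤ k ∧
        ∀ x : {x : ∀ i, X i // ∀ i, f i (x (i + 1)) = x i}, (x, H^[k] x) ∈ U j :=
      fun j m => PE (U j) (hU.mem j) m
    choose k hk1 hk2 using PE'
    set n : ℕ → ℕ := fun m => Nat.rec (k 0 0) (fun j prev => k (j+1) (prev+1)) m with hn
    have hmono : StrictMono n := by
      apply strictMono_nat_of_lt_succ
      intro m
      exact lt_of_lt_of_le (Nat.lt_succ_self _) (hk1 (m+1) (n m + 1))
    have hprop : ∀ m, ∀ x : {x : ∀ i, X i // ∀ i, f i (x (i + 1)) = x i},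
        (x, H^[n m] x) ∈ U m := by
      intro m
      cases m with
      | zero => exact hk2 0 0
      | succ m => exact hk2 (m+1) (n m + 1)
    refine ⟨n, hmono, ?_⟩
    intro u hu
    obtain ⟨j₀, -, hj₀⟩ := hU.toHasBasis.mem_iff.mp hu
    filter_upwards [eventually_ge_atTop j₀] with j hj x
    exact hj₀ (hU.antitone hj (hprop j x))
end

section
/- Let T : X → X be a continuous map of a compact metric space, let S : Y → Y be a continuous map of a compact metric space, and let π : X → Y be a continuous surjective factor map (π ∘ T = S ∘ π) that is finite-to-one, i.e., there is a uniform bound M on the cardinality of fibers π⁻¹(y). Then the topological entropies coincide: h_top(T) = h_top(S). -/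
open Dynamics Set Function Filter Uniformity UniformSpace ENNReal EReal
open scoped SetRel


lemma bowen_key {X Y : Type*} [UniformSpace X] [CompactSpace X] [UniformSpace Y]
    [CompactSpace Y] [T2Space Y] {T : X → X} (hT : Continuous T) {π : X → Y} (hπ : Continuous π)
    (hsurj : Function.Surjective π) {M : ℕ}
    (hfin : ∀ y : Y, (π ⁻¹' {y}).Finite) (hbound : ∀ y : Y, (π ⁻¹' {y}).ncard ≤ M)
    {U : Set (X × X)} (hU : U ∈ 𝓤 X) (n : ℕ) :
    ∃ V ∈ 𝓤 Y, SetRel.IsSymm V ∧ ∀ y : Y, ∃ t : Finset X, t.Nonempty ∧ t.card ≤ M ∧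
      π ⁻¹' (ball y V) ⊆ ⋃ x ∈ (t : Set X), ball x (dynEntourage T U n) := by
  obtain ⟨U', ⟨U'_uni, U'_open⟩, U'_sub⟩ := (uniformity_hasBasis_open.mem_iff).1 hU
  set O : Y → Set X := fun y => ⋃ x ∈ π ⁻¹' {y}, ball x (dynEntourage T U' n) with hO
  have O_open : ∀ y, IsOpen (O y) := fun y => isOpen_biUnion fun x _ =>
    (isOpen.dynEntourage hT U'_open n).preimage (Continuous.prodMk_right x)
  have fiber_sub : ∀ y, π ⁻¹' {y} ⊆ O y := by
    intro y x hx
    refine mem_biUnion hx ?_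
    simp only [ball, mem_preimage, mem_dynEntourage]
    exact fun k _ => refl_mem_uniformity U'_uni
  set W : Y → Set Y := fun y => (π '' (O y)ᶜ)ᶜ with hW
  have W_open : ∀ y, IsOpen (W y) := by
    intro y
    rw [hW, isOpen_compl_iff]
    exact (((O_open y).isClosed_compl).isCompact.image hπ).isClosed
  have W_mem : ∀ y, y ∈ W y := by
    intro y hy
    obtain ⟨x, hx, hxy⟩ := hy
    exact hx (fiber_sub y hxy)
  have preW : ∀ y, π ⁻¹' (W y) ⊆ O y := by
    intro y x hx
    by_contra hxO
    exact hx ⟨x, hxO, rfl⟩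
  obtain ⟨V, V_uni, hV⟩ := lebesgue_number_lemma (isCompact_univ (X := Y)) W_open
    (fun y _ => mem_iUnion.2 ⟨y, W_mem y⟩)
  refine ⟨SetRel.symmetrize V, symmetrize_mem_uniformity V_uni, inferInstance, fun y => ?_⟩
  obtain ⟨i, hi⟩ := hV y (mem_univ y)
  refine ⟨(hfin i).toFinset, ?_, ?_, ?_⟩
  · obtain ⟨x, hx⟩ := hsurj i
    exact ⟨x, (hfin i).mem_toFinset.2 hx⟩
  · rw [← Set.ncard_eq_toFinset_card _ (hfin i)]
    exact hbound i
  · intro x hx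
    have : x ∈ O i := preW i (hi (ball_mono SetRel.symmetrize_subset_self y hx))
    obtain ⟨z, hz, hxz⟩ := mem_iUnion₂.1 this
    refine mem_iUnion₂.2 ⟨z, ?_, ?_⟩
    · exact (hfin i).mem_toFinset.2 hz
    · exact ball_mono (dynEntourage_monotone T n U'_sub) z hxz


lemma bowen_cover {X Y : Type*} [Nonempty X] {T : X → X} {S : Y → Y} {π : X → Y}
    (hsemi : ∀ x : X, π (T x) = S (π x))
    {U : Set (X × X)} (U_symm : SetRel.IsSymm U) {V : Set (Y × Y)} (V_symm : SetRel.IsSymm V)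
    {n : ℕ} (hn : 0 < n) {M : ℕ} {t : Y → Finset X}
    (ht : ∀ y : Y, (t y).Nonempty ∧ (t y).card ≤ M ∧
      π ⁻¹' (ball y V) ⊆ ⋃ x ∈ (t y : Set X), ball x (dynEntourage T U n))
    {m : ℕ} {s : Finset Y} (hs : IsDynCoverOf S Set.univ V m s) :
    ∃ c : Finset X, IsDynCoverOf T Set.univ (U ○ U) m c ∧
      c.card ≤ s.card * M ^ (m / n + 1) := by
  classical
  set k := m / n + 1 with hk
  -- the "itinerary" sets
  set A : Y → (Fin k → X) → Set X := fun y f =>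
    {x | ∀ b : Fin k, (b : ℕ) * n < m →
      T^[(b : ℕ) * n] x ∈ ball (f b) (dynEntourage T U n)} with hA
  -- claim 1 : every point lies in some A y f with y ∈ s, f ∈ piFinset
  have claim1 : ∀ x : X, ∃ y ∈ s,
      ∃ f ∈ Fintype.piFinset (fun b : Fin k => t (S^[(b : ℕ) * n] y)), x ∈ A y f := by
    intro x
    obtain ⟨y, hy, hxy⟩ := hs (mem_univ (π x))
    refine ⟨y, hy, ?_⟩
    have hsemi_it : ∀ j : ℕ, π (T^[j] x) = S^[j] (π x) := fun j =>
      (Function.Semiconj.iterate_right (fun x => hsemi x) j).eq x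
    have key : ∀ b : Fin k, ∃ z, z ∈ t (S^[(b : ℕ) * n] y) ∧
        ((b : ℕ) * n < m → T^[(b : ℕ) * n] x ∈ ball z (dynEntourage T U n)) := by
      intro b
      by_cases hbm : (b : ℕ) * n < m
      · have h1 : S^[(b : ℕ) * n] (π x) ∈ ball (S^[(b : ℕ) * n] y) V :=
          mem_ball_symmetry.1 (mem_dynEntourage.1 hxy _ hbm)
        have h2 : T^[(b : ℕ) * n] x ∈ π ⁻¹' (ball (S^[(b : ℕ) * n] y) V) := by
          rw [mem_preimage, hsemi_it]; exact h1
        obtain ⟨z, hz, hz2⟩ := mem_iUnion₂.1 ((ht _).2.2 h2)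
        exact ⟨z, hz, fun _ => hz2⟩
      · obtain ⟨z, hz⟩ := (ht (S^[(b : ℕ) * n] y)).1
        exact ⟨z, hz, fun h => absurd h hbm⟩
    choose f hf1 hf2 using key
    exact ⟨f, Fintype.mem_piFinset.2 hf1, hf2⟩
  -- claim 2 : points in a common A y f are dynamically (U ○ U)-close
  have claim2 : ∀ y f, ∀ w ∈ A y f, ∀ x ∈ A y f,
      x ∈ ball w (dynEntourage T (U ○ U) m) := by
    intro y f w hw x hx
    rw [mem_ball_dynEntourage]
    intro j hj
    set b := j / n with hb
    set r := j % n with hr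
    have hbk : b < k := by
      rw [hk, hb]
      exact Nat.lt_succ_of_le (Nat.div_le_div_right hj.le)
    have hbnm : b * n < m := lt_of_le_of_lt (Nat.div_mul_le_self j n) hj
    have hrn : r < n := Nat.mod_lt j hn
    have hjenc : r + b * n = j := by
      rw [hr, hb, mul_comm]
      exact Nat.mod_add_div j n
    have hw' := mem_ball_dynEntourage.1 (hw ⟨b, hbk⟩ hbnm) r hrn
    have hx' := mem_ball_dynEntourage.1 (hx ⟨b, hbk⟩ hbnm) r hrn
    rw [← Function.iterate_add_apply, hjenc] at hw' hx'
    rw [mem_ball_symmetry] at hw'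
    exact mem_ball_comp hw' hx'
  -- choose a witness in each nonempty `A y f`
  set wit : Y → (Fin k → X) → X := fun y f =>
    if h : (A y f).Nonempty then h.choose else Classical.arbitrary X with hwit
  set idx : Finset ((_ : Y) × (Fin k → X)) :=
    s.sigma (fun y => Fintype.piFinset (fun b : Fin k => t (S^[(b : ℕ) * n] y))) with hidx
  refine ⟨idx.image (fun p => wit p.1 p.2), ?_, ?_⟩
  · intro x _
    obtain ⟨y, hy, f, hf, hxA⟩ := claim1 x
    have hne : (A y f).Nonempty := ⟨x, hxA⟩
    have hwmem : wit y f ∈ A y f := by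
      rw [hwit]
      simp only [hne, dif_pos]
      exact hne.choose_spec
    refine ⟨wit y f, ?_, claim2 y f x hxA (wit y f) hwmem⟩
    exact Finset.mem_coe.2 (Finset.mem_image.2 ⟨⟨y, f⟩, Finset.mem_sigma.2 ⟨hy, hf⟩, rfl⟩)
  · refine Finset.card_image_le.trans ?_
    rw [hidx, Finset.card_sigma]
    have hbnd : ∀ y ∈ s, (Fintype.piFinset (fun b : Fin k => t (S^[(b : ℕ) * n] y))).card
        ≤ M ^ k := by
      intro y _
      rw [Fintype.card_piFinset]
      calc ∏ b : Fin k, (t (S^[(b : ℕ) * n] y)).card ≤ ∏ _b : Fin k, M :=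
            Finset.prod_le_prod' (fun b _ => (ht _).2.1)
        _ = M ^ k := by rw [Finset.prod_const, Finset.card_univ, Fintype.card_fin]
    calc ∑ y ∈ s, (Fintype.piFinset (fun b : Fin k => t (S^[(b : ℕ) * n] y))).card
        ≤ ∑ _y ∈ s, M ^ k := Finset.sum_le_sum hbnd
      _ = s.card * M ^ k := by rw [Finset.sum_const, smul_eq_mul]

lemma bowen_entourage {X Y : Type*} [UniformSpace X] [CompactSpace X] [UniformSpace Y]
    [CompactSpace Y] [T2Space Y] [Nonempty X] [Nonempty Y]
    {T : X → X} {S : Y → Y} (hT : Continuous T) (hS : Continuous S)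
    {π : X → Y} (hπ : Continuous π) (hsurj : Function.Surjective π)
    (hsemi : ∀ x : X, π (T x) = S (π x)) {M : ℕ} (hM : 1 ≤ M)
    (hfin : ∀ y : Y, (π ⁻¹' {y}).Finite) (hbound : ∀ y : Y, (π ⁻¹' {y}).ncard ≤ M)
    {U : Set (X × X)} (hU : U ∈ 𝓤 X) (U_symm : SetRel.IsSymm U) {n : ℕ} (hn : 0 < n) :
    coverEntropyEntourage T Set.univ (U ○ U)
      ≤ coverEntropy S Set.univ + ENNReal.log M / n := by
  obtain ⟨V, V_uni, V_symm, hV⟩ := bowen_key hT hπ hsurj hfin hbound hU n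
  choose t ht using hV
  have UC_S : UniformContinuous S := CompactSpace.uniformContinuous_of_continuous hS
  -- the entropy of `M`
  set Λ : EReal := ENNReal.log (M : ℝ≥0∞) with hΛ
  have hΛtop : Λ ≠ ⊤ := by
    rw [hΛ]
    exact (ENNReal.log_lt_top_iff.2 (ENNReal.natCast_lt_top M)).ne
  have hΛ0 : 0 ≤ Λ := by
    rw [hΛ, ← ENNReal.log_one]
    exact ENNReal.log_monotone (by exact_mod_cast hM)
  set l : ℝ := Λ.toReal with hl
  have hlΛ : (l : EReal) = Λ := EReal.coe_toReal hΛtop (by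
    intro h; rw [h] at hΛ0; exact absurd hΛ0 (by simp))
  have hl0 : 0 ≤ l := by
    rw [← EReal.coe_le_coe_iff, hlΛ]; exact_mod_cast hΛ0
  -- the `coverMincard` estimate
  have mbound : ∀ m : ℕ, coverMincard T Set.univ (U ○ U) m
      ≤ coverMincard S Set.univ V m * ((M : ℕ∞)) ^ (m / n + 1) := by
    intro m
    have hfinS : coverMincard S Set.univ V m < ⊤ :=
      coverMincard_finite_of_isCompact_uniformContinuous isCompact_univ UC_S V_uni m
    obtain ⟨s, hs, hscard⟩ := (coverMincard_finite_iff S Set.univ V m).1 hfinS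
    obtain ⟨c, hc, hccard⟩ := bowen_cover hsemi U_symm V_symm hn ht hs
    calc coverMincard T Set.univ (U ○ U) m ≤ (c.card : ℕ∞) := hc.coverMincard_le_card
      _ ≤ ((s.card * M ^ (m / n + 1) : ℕ) : ℕ∞) := by exact_mod_cast hccard
      _ = coverMincard S Set.univ V m * ((M : ℕ∞)) ^ (m / n + 1) := by
          push_cast
          rw [hscard]
  -- the per-`m` EReal estimate
  have per_m : ∀ m : ℕ, 1 ≤ m →
      ENNReal.log (coverMincard T Set.univ (U ○ U) m) / (m : ℕ)
        ≤ ENNReal.log (coverMincard S Set.univ V m) / (m : ℕ) + ((l / n + l / m : ℝ) : EReal) := by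
    intro m hm
    have hm0 : (0 : ℝ) < m := by exact_mod_cast hm
    have hn0 : (0 : ℝ) < n := by exact_mod_cast hn
    set k := m / n + 1 with hk
    have step1 : ENNReal.log (coverMincard T Set.univ (U ○ U) m)
        ≤ ENNReal.log (coverMincard S Set.univ V m) + (k : EReal) * Λ := by
      have := ENNReal.log_monotone (ENat.toENNReal_mono (mbound m))
      rw [ENat.toENNReal_mul, ENNReal.log_mul_add] at this
      refine this.trans (le_of_eq ?_)
      congr 1
      rw [ENat.toENNReal_pow, ENNReal.log_pow, ENat.toENNReal_coe]
    have step2 : ENNReal.log (coverMincard T Set.univ (U ○ U) m) / (m : ℕ)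
        ≤ (ENNReal.log (coverMincard S Set.univ V m) + (k : EReal) * Λ) / (m : ℕ) :=
      monotone_div_right_of_nonneg (by exact_mod_cast hm0.le) step1
    refine step2.trans ?_
    have hsplit : (ENNReal.log (coverMincard S Set.univ V m) + (k : EReal) * Λ) / (m : ℕ)
        = ENNReal.log (coverMincard S Set.univ V m) / (m : ℕ) + ((k : EReal) * Λ) / (m : ℕ) := by
      refine EReal.div_right_distrib_of_nonneg ?_ ?_
      · rw [← ENNReal.log_one]; exact ENNReal.log_monotone (by exact_mod_cast (one_le_coverMincard_iff S Set.univ V m).2 Set.univ_nonempty)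
      · exact mul_nonneg (by exact_mod_cast Nat.zero_le k) hΛ0
    rw [hsplit]
    refine add_le_add_right ?_ _
    have hcoe : ((k : EReal) * Λ) / (m : ℕ) = (((k : ℝ) * l / m : ℝ) : EReal) := by
      rw [← hlΛ, ← EReal.coe_coe_eq_natCast k, ← EReal.coe_coe_eq_natCast m, ← EReal.coe_mul,
        ← EReal.coe_div]
    rw [hcoe, EReal.coe_le_coe_iff]
    -- the real inequality
    have hdivle : ((m / n : ℕ) : ℝ) ≤ (m : ℝ) / n := Nat.cast_div_le
    have heq : ((m : ℝ) / n + 1) * l / m = l / n + l / m := by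
      field_simp
    calc (k : ℝ) * l / m ≤ ((m : ℝ) / n + 1) * l / m := by
          rw [hk]
          push_cast
          gcongr
      _ = l / n + l / m := heq
  -- limsup manipulation
  have key : coverEntropyEntourage T Set.univ (U ○ U)
      ≤ coverEntropyEntourage S Set.univ V + ((l / n : ℝ) : EReal) := by
    set u : ℕ → EReal := fun m => ENNReal.log (coverMincard S Set.univ V m) / (m : ℕ) with hu
    set v : ℕ → EReal := fun m => ((l / n + l / m : ℝ) : EReal) with hv
    have hvlim : Filter.Tendsto v Filter.atTop (nhds ((l / n : ℝ) : EReal)) := by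
      rw [hv]
      refine EReal.tendsto_coe.2 ?_
      have : Filter.Tendsto (fun m : ℕ => l / n + l / m) Filter.atTop (nhds (l / n + 0)) :=
        tendsto_const_nhds.add (tendsto_const_div_atTop_nhds_zero_nat l)
      rwa [add_zero] at this
    have hvlimsup : Filter.atTop.limsup v = ((l / n : ℝ) : EReal) := hvlim.limsup_eq
    have h1 : coverEntropyEntourage T Set.univ (U ○ U) ≤ Filter.atTop.limsup (u + v) := by
      refine limsup_le_limsup (Filter.eventually_atTop.2 ⟨1, fun m hm => ?_⟩)
      exact per_m m hm
    refine h1.trans ?_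
    have h2 := EReal.limsup_add_le (u := u) (v := v) (f := Filter.atTop)
      (Or.inr (hvlimsup ▸ EReal.coe_ne_top _)) (Or.inr (hvlimsup ▸ EReal.coe_ne_bot _))
    rw [hvlimsup] at h2
    exact h2
  refine key.trans ?_
  have h3 : coverEntropyEntourage S Set.univ V ≤ coverEntropy S Set.univ :=
    coverEntropyEntourage_le_coverEntropy S Set.univ V_uni
  have h4 : ((l / n : ℝ) : EReal) = ENNReal.log (M : ℝ≥0∞) / (n : ℕ) := by
    rw [← hΛ, ← hlΛ, ← EReal.coe_coe_eq_natCast n, ← EReal.coe_div]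
  calc coverEntropyEntourage S Set.univ V + ((l / n : ℝ) : EReal)
      ≤ coverEntropy S Set.univ + ((l / n : ℝ) : EReal) := add_le_add_left h3 _
    _ = coverEntropy S Set.univ + ENNReal.log M / n := by rw [h4]


/-- Bowen: If `π : X → Y` is a continuous surjective factor map between
compact metric dynamical systems `(X, T)` and `(Y, S)` (so `π ∘ T = S ∘ π`) whose fibers
have uniformly bounded finite cardinality, then the topological entropies coincide. -/
theorem pseudo_suspension_stmt10
    {X Y : Type*} [MetricSpace X] [CompactSpace X] [MetricSpace Y] [CompactSpace Y]
    (T : X → X) (S : Y → Y) (hT : Continuous T) (hS : Continuous S)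
    (π : X → Y) (hπ : Continuous π) (hsurj : Function.Surjective π)
    (hsemi : ∀ x : X, π (T x) = S (π x))
    (M : ℕ)
    (hfin : ∀ y : Y, (π ⁻¹' {y}).Finite)
    (hbound : ∀ y : Y, (π ⁻¹' {y}).ncard ≤ M) :
    coverEntropy T (Set.univ : Set X) = coverEntropy S (Set.univ : Set Y) := by
  rcases isEmpty_or_nonempty X with hX | hX
  · have hY : IsEmpty Y := ⟨fun y => (hsurj y).elim (fun x _ => hX.false x)⟩
    rw [Set.univ_eq_empty_iff.2 hX, Set.univ_eq_empty_iff.2 hY, coverEntropy_empty,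
      coverEntropy_empty]
  have hY : Nonempty Y := ⟨π (Classical.arbitrary X)⟩
  have hM : 1 ≤ M := by
    obtain ⟨y⟩ := hY
    obtain ⟨x, hx⟩ := hsurj y
    have h1 : 0 < (π ⁻¹' {y}).ncard := (Set.ncard_pos (hfin y)).2 ⟨x, hx⟩
    exact h1.trans_le (hbound y)
  refine le_antisymm ?_ ?_
  · -- hard direction : `h(T) ≤ h(S)`
    rcases eq_top_or_lt_top (coverEntropy S Set.univ) with htop | hlt
    · rw [htop]; exact le_top
    have hC0 : 0 ≤ coverEntropy S Set.univ := coverEntropy_nonneg S Set.univ_nonempty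
    set c : ℝ := (coverEntropy S Set.univ).toReal with hc
    have hcC : (c : EReal) = coverEntropy S Set.univ :=
      EReal.coe_toReal hlt.ne (by intro h; rw [h] at hC0; exact absurd hC0 (by simp))
    -- the constant `l = log M`
    set Λ : EReal := ENNReal.log (M : ℝ≥0∞) with hΛ
    have hΛtop : Λ ≠ ⊤ := by
      rw [hΛ]
      exact (ENNReal.log_lt_top_iff.2 (ENNReal.natCast_lt_top M)).ne
    have hΛ0 : 0 ≤ Λ := by
      rw [hΛ, ← ENNReal.log_one]
      exact ENNReal.log_monotone (by exact_mod_cast hM)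
    set l : ℝ := Λ.toReal with hl
    have hlΛ : (l : EReal) = Λ := EReal.coe_toReal hΛtop (by
      intro h; rw [h] at hΛ0; exact absurd hΛ0 (by simp))
    rw [coverEntropy]
    refine iSup₂_le fun U0 hU0 => ?_
    obtain ⟨W, W_uni, W_symm, hWU0⟩ := comp_symm_mem_uniformity_sets hU0
    have hstep : ∀ n : ℕ, 1 ≤ n →
        coverEntropyEntourage T Set.univ U0 ≤ ((c + l / n : ℝ) : EReal) := by
      intro n hn
      have h1 : coverEntropyEntourage T Set.univ U0
          ≤ coverEntropyEntourage T Set.univ (W ○ W) :=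
        coverEntropyEntourage_antitone T Set.univ hWU0
      have h2 := bowen_entourage hT hS hπ hsurj hsemi hM hfin hbound W_uni W_symm hn
      refine (h1.trans h2).trans (le_of_eq ?_)
      rw [← hcC, ← hΛ, ← hlΛ, ← EReal.coe_coe_eq_natCast n, ← EReal.coe_div, ← EReal.coe_add]
    have hlim : Filter.Tendsto (fun n : ℕ => ((c + l / n : ℝ) : EReal))
        Filter.atTop (nhds ((c : ℝ) : EReal)) := by
      refine EReal.tendsto_coe.2 ?_
      have : Filter.Tendsto (fun n : ℕ => c + l / n) Filter.atTop (nhds (c + 0)) :=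
        tendsto_const_nhds.add (tendsto_const_div_atTop_nhds_zero_nat l)
      rwa [add_zero] at this
    have := ge_of_tendsto hlim (Filter.eventually_atTop.2 ⟨1, fun n hn => hstep n hn⟩)
    rw [hcC] at this
    exact this
  · -- easy direction : `h(S) ≤ h(T)`
    have hπUC : UniformContinuous π := CompactSpace.uniformContinuous_of_continuous hπ
    have hsj : Function.Semiconj π T S := fun x => hsemi x
    have := coverEntropy_image_le_of_uniformContinuous hsj hπUC Set.univ
    rwa [Set.image_univ, hsurj.range_eq] at this
end
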